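/- For p ∈ (0,1), the Bell-diagonal state ρ = p|Φ₁⟩⟨Φ₁| + (1−p)|Φ₄⟩⟨Φ₄| has maximal teleportation fidelity F = (2p+1)/3 when p > 1/2, F = 2/3 when p = 1/2, F = 1 − 2p/3 when p < 1/2, and fidelity deviation Δ = 2(1−p)/(3√5), 1/(3√5), 2p/(3√5) in these respective cases; in particular Δ ≠ 0 for all p ∈ (0,1). -/

import Mathlib

open Matrix Complex Kronecker

noncomputable section

/-- The three Pauli matrices. -/
def pauli : Fin 3 → Matrix (Fin 2) (Fin 2) ℂ :=
  ![!![0, 1; 1, 0], !![0, -Complex.I; Complex.I, 0], !![1, 0; 0, -1]]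

/-- Outer product |v⟩⟨v| of a two-qubit vector. -/
def proj (v : Fin 2 × Fin 2 → ℂ) : Matrix (Fin 2 × Fin 2) (Fin 2 × Fin 2) ℂ :=
  Matrix.of fun i j => v i * (starRingEnd ℂ) (v j)

/-- The four Bell states Φ₁, Φ₂, Φ₃, Φ₄. -/
def bell : Fin 4 → (Fin 2 × Fin 2 → ℂ) :=
  ![fun x => if x.1 = x.2 then ((Real.sqrt 2 : ℂ))⁻¹ else 0,
    fun x => if x.1 ≠ x.2 then ((Real.sqrt 2 : ℂ))⁻¹ else 0,
    fun x => if x = (0, 1) then ((Real.sqrt 2 : ℂ))⁻¹ else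
             if x = (1, 0) then -((Real.sqrt 2 : ℂ))⁻¹ else 0,
    fun x => if x = (0, 0) then ((Real.sqrt 2 : ℂ))⁻¹ else
             if x = (1, 1) then -((Real.sqrt 2 : ℂ))⁻¹ else 0]

/-- Correlation matrix entries T_ij = Tr(ρ (σ_i ⊗ σ_j)). -/
def corr (ρ : Matrix (Fin 2 × Fin 2) (Fin 2 × Fin 2) ℂ) (i j : Fin 3) : ℝ :=
  (Matrix.trace (ρ * (pauli i ⊗ₖ pauli j))).re

/-- Maximal teleportation fidelity of a state with diagonal correlation matrix. -/
def maxFid (ρ : Matrix (Fin 2 × Fin 2) (Fin 2 × Fin 2) ℂ) : ℝ :=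
  (1 + (|corr ρ 0 0| + |corr ρ 1 1| + |corr ρ 2 2|) / 3) / 2

/-- Fidelity deviation of a state with diagonal correlation matrix. -/
def fidDev (ρ : Matrix (Fin 2 × Fin 2) (Fin 2 × Fin 2) ℂ) : ℝ :=
  (3 * Real.sqrt 10)⁻¹ *
    Real.sqrt ((|corr ρ 0 0| - |corr ρ 1 1|) ^ 2 + (|corr ρ 0 0| - |corr ρ 2 2|) ^ 2 +
      (|corr ρ 1 1| - |corr ρ 2 2|) ^ 2)



lemma sq2 : ((Real.sqrt 2 : ℂ))⁻¹ * ((Real.sqrt 2 : ℂ))⁻¹ = 2⁻¹ := by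
  rw [← mul_inv]
  norm_cast
  rw [Real.mul_self_sqrt (by norm_num)]
  norm_num

lemma corr00 (p : ℝ) : corr ((p : ℂ) • proj (bell 0) + ((1 - p : ℝ) : ℂ) • proj (bell 3)) 0 0 = 2*p - 1 := by
  simp only [corr, pauli, proj, bell, Matrix.trace, Matrix.diag, Matrix.mul_apply,
    Fin.sum_univ_succ, Fin.sum_univ_zero, Fintype.sum_prod_type, Matrix.add_apply,
    Matrix.smul_apply, kroneckerMap_apply, Matrix.cons_val_zero, Matrix.cons_val_one,
    Matrix.head_cons, Matrix.of_apply, Matrix.cons_val', Matrix.head_fin_const, Matrix.cons_val]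
  norm_num [sq2, map_inv₀, Complex.ext_iff]
  ring

lemma corr11 (p : ℝ) : corr ((p : ℂ) • proj (bell 0) + ((1 - p : ℝ) : ℂ) • proj (bell 3)) 1 1 = 1 - 2*p := by
  simp only [corr, pauli, proj, bell, Matrix.trace, Matrix.diag, Matrix.mul_apply,
    Fin.sum_univ_succ, Fin.sum_univ_zero, Fintype.sum_prod_type, Matrix.add_apply,
    Matrix.smul_apply, kroneckerMap_apply, Matrix.cons_val_zero, Matrix.cons_val_one,
    Matrix.head_cons, Matrix.of_apply, Matrix.cons_val', Matrix.head_fin_const, Matrix.cons_val]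
  norm_num [sq2, map_inv₀, Complex.ext_iff]
  ring

lemma corr22 (p : ℝ) : corr ((p : ℂ) • proj (bell 0) + ((1 - p : ℝ) : ℂ) • proj (bell 3)) 2 2 = 1 := by
  simp only [corr, pauli, proj, bell, Matrix.trace, Matrix.diag, Matrix.mul_apply,
    Fin.sum_univ_succ, Fin.sum_univ_zero, Fintype.sum_prod_type, Matrix.add_apply,
    Matrix.smul_apply, kroneckerMap_apply, Matrix.cons_val_zero, Matrix.cons_val_one,
    Matrix.head_cons, Matrix.of_apply, Matrix.cons_val', Matrix.head_fin_const, Matrix.cons_val]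
  norm_num [sq2, map_inv₀, Complex.ext_iff]
  ring

lemma h10 : Real.sqrt 10 = Real.sqrt 2 * Real.sqrt 5 := by
  rw [← Real.sqrt_mul (by norm_num)]; norm_num

/-- Dephasing-channel output p|Φ₁⟩⟨Φ₁| + (1-p)|Φ₄⟩⟨Φ₄|: maximal fidelity and
fidelity deviation in the three regimes, and nonvanishing deviation. -/
theorem stmt_4 (p : ℝ) (hp0 : 0 < p) (hp1 : p < 1) :
    (1 / 2 < p → maxFid ((p : ℂ) • proj (bell 0) + ((1 - p : ℝ) : ℂ) • proj (bell 3))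
        = (2 * p + 1) / 3) ∧
    (p = 1 / 2 → maxFid ((p : ℂ) • proj (bell 0) + ((1 - p : ℝ) : ℂ) • proj (bell 3))
        = 2 / 3) ∧
    (p < 1 / 2 → maxFid ((p : ℂ) • proj (bell 0) + ((1 - p : ℝ) : ℂ) • proj (bell 3))
        = 1 - 2 * p / 3) ∧
    (1 / 2 < p → fidDev ((p : ℂ) • proj (bell 0) + ((1 - p : ℝ) : ℂ) • proj (bell 3))
        = 2 * (1 - p) / (3 * Real.sqrt 5)) ∧
    (p = 1 / 2 → fidDev ((p : ℂ) • proj (bell 0) + ((1 - p : ℝ) : ℂ) • proj (bell 3))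
        = 1 / (3 * Real.sqrt 5)) ∧
    (p < 1 / 2 → fidDev ((p : ℂ) • proj (bell 0) + ((1 - p : ℝ) : ℂ) • proj (bell 3))
        = 2 * p / (3 * Real.sqrt 5)) ∧
    fidDev ((p : ℂ) • proj (bell 0) + ((1 - p : ℝ) : ℂ) • proj (bell 3)) ≠ 0 := by
  set ρ := ((p : ℂ) • proj (bell 0) + ((1 - p : ℝ) : ℂ) • proj (bell 3)) with hρ
  have h00 := corr00 p
  have h11 := corr11 p
  have h22 := corr22 p
  have habs : |corr ρ 1 1| = |corr ρ 0 0| := by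
    rw [h00, h11, ← abs_neg]; ring_nf
  have ha1 : |corr ρ 0 0| ≤ 1 := by
    rw [h00, abs_le]; constructor <;> linarith
  have ha1' : |corr ρ 0 0| < 1 := by
    rw [h00, abs_lt]; constructor <;> linarith
  have hmf : maxFid ρ = (1 + (2 * |corr ρ 0 0| + 1) / 3) / 2 := by
    unfold maxFid
    rw [habs, h22, abs_one]; ring
  have hs2 : (0:ℝ) < Real.sqrt 2 := Real.sqrt_pos.mpr (by norm_num)
  have hs5 : (0:ℝ) < Real.sqrt 5 := Real.sqrt_pos.mpr (by norm_num)
  have hfd : fidDev ρ = (1 - |corr ρ 0 0|) / (3 * Real.sqrt 5) := by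
    unfold fidDev
    rw [habs, h22, abs_one]
    have hsq : (|corr ρ 0 0| - |corr ρ 0 0|) ^ 2 + (|corr ρ 0 0| - 1) ^ 2 +
        (|corr ρ 0 0| - 1) ^ 2 = (Real.sqrt 2 * (1 - |corr ρ 0 0|)) ^ 2 := by
      rw [mul_pow, Real.sq_sqrt (by norm_num)]; ring
    rw [hsq, Real.sqrt_sq (mul_nonneg hs2.le (by linarith)), h10]
    field_simp
  refine ⟨fun h => ?_, fun h => ?_, fun h => ?_, fun h => ?_, fun h => ?_, fun h => ?_, ?_⟩
  · rw [hmf, h00, _root_.abs_of_nonneg (by linarith)]; ring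
  · rw [hmf, h00, h]; norm_num
  · rw [hmf, h00, _root_.abs_of_nonpos (by linarith)]; ring
  · rw [hfd, h00, _root_.abs_of_nonneg (by linarith)]; ring
  · rw [hfd, h00, h]; norm_num
  · rw [hfd, h00, _root_.abs_of_nonpos (by linarith)]; ring
  · rw [hfd]
    exact ne_of_gt (div_pos (by linarith) (by positivity))

end
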